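/- Given jobs with service requirements x_1 ≥ ... ≥ x_k ≥ 0 and machines with speeds s_1 > ... > s_k > 0, a preemptive schedule completing all jobs within one unit of time exists if and only if Σ_{i=1}^ℓ x_i ≤ Σ_{i=1}^ℓ s_i for all ℓ = 1,...,k. -/
import Mathlib

open Finset in
lemma sum_Iic_eq_range {K : ℕ} (g : Fin K → ℝ) (G : ℕ → ℝ)
    (hG : ∀ (j : ℕ) (h : j < K), G j = g ⟨j, h⟩) (ℓ : Fin K) :
    ∑ i ∈ Finset.Iic ℓ, g i = ∑ j ∈ Finset.range ((ℓ : ℕ) + 1), G j := by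
  refine Finset.sum_bij' (fun a _ => (a : ℕ))
    (fun b hb => ⟨b, lt_of_lt_of_le (Finset.mem_range.mp hb) ℓ.2⟩)
    ?_ ?_ ?_ ?_ ?_
  · intro a ha
    have h : a ≤ ℓ := Finset.mem_Iic.mp ha
    simp only [Finset.mem_range]
    exact Nat.lt_succ_of_le h
  · intro b hb
    have : b ≤ (ℓ : ℕ) := Nat.lt_succ_iff.mp (Finset.mem_range.mp hb)
    simpa [Finset.mem_Iic, Fin.le_def] using this
  · intro a _; simp
  · intro b _; simp
  · intro a _
    exact (hG a a.2).symm.trans (by congr 1)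

open Finset in
private lemma lemA' : ∀ (k : ℕ) (s x : ℕ → ℝ),
    (∀ i j : ℕ, i ≤ j → j < k → s j ≤ s i) →
    (∀ j < k, 0 < s j) →
    (∀ i j : ℕ, i ≤ j → j < k → x j ≤ x i) →
    (∀ i < k, 0 ≤ x i) →
    (∀ ℓ < k, ∑ i ∈ range (ℓ+1), x i ≤ ∑ i ∈ range (ℓ+1), s i) →
    ∃ t : ℕ → ℕ → ℝ,
      (∀ i j, 0 ≤ t i j) ∧
      (∀ i < k, ∑ j ∈ range k, t i j ≤ 1) ∧
      (∀ j < k, ∑ i ∈ range k, t i j ≤ 1) ∧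
      (∀ i < k, x i = ∑ j ∈ range k, t i j * s j) := by
  intro k
  induction k with
  | zero =>
    intro s x _ _ _ _ _
    exact ⟨fun _ _ => 0, fun i j => le_refl 0,
      fun i hi => absurd hi (Nat.not_lt_zero i),
      fun j hj => absurd hj (Nat.not_lt_zero j),
      fun i hi => absurd hi (Nat.not_lt_zero i)⟩
  | succ n IH =>
    intro s x hs hspos hx hxpos hpre
    by_cases hx0 : x 0 ≤ 0
    · refine ⟨fun _ _ => 0, fun _ _ => le_refl 0, by simp, by simp, ?_⟩
      intro i hi
      have h1 : x i ≤ 0 := le_trans (hx 0 i (Nat.zero_le i) hi) hx0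
      have h2 := hxpos i hi
      simp [le_antisymm h1 h2]
    push_neg at hx0
    have hx0s0 : x 0 ≤ s 0 := by
      have := hpre 0 (Nat.succ_pos n)
      simpa using this
    classical
    set m := Nat.findGreatest (fun j => x 0 ≤ s j) n with hm_def
    have hmn : m ≤ n := Nat.findGreatest_le n
    have hsm : x 0 ≤ s m := Nat.findGreatest_spec (P := fun j => x 0 ≤ s j) (Nat.zero_le n) hx0s0
    by_cases hmcase : m = n
    · -- all speeds ≥ x 0 : diagonal schedule
      have hdiag : ∀ i < n + 1, x i ≤ s i := by
        intro i hi
        calc x i ≤ x 0 := hx 0 i (Nat.zero_le i) hi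
        _ ≤ s m := hsm
        _ ≤ s i := by
            rw [hmcase]
            exact hs i n (by omega) (by omega)
      refine ⟨fun i j => if i = j ∧ i < n + 1 then x i / s i else 0, ?_, ?_, ?_, ?_⟩
      · intro i j
        dsimp only
        split
        · next h => exact div_nonneg (hxpos i h.2) (hspos i h.2).le
        · exact le_refl 0
      · intro i hi
        dsimp only
        have e : ∀ j, (if i = j ∧ i < n + 1 then x i / s i else 0)
            = (if j = i then x i / s i else 0) := by
          intro j
          by_cases h : j = i
          · subst h; rw [if_pos ⟨rfl, hi⟩, if_pos rfl]
          · rw [if_neg (by tauto), if_neg h]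
        rw [Finset.sum_congr rfl (fun j _ => e j), Finset.sum_ite_eq',
          if_pos (Finset.mem_range.mpr hi)]
        rw [div_le_one (hspos i hi)]
        exact hdiag i hi
      · intro j hj
        dsimp only
        have e : ∀ i, (if i = j ∧ i < n + 1 then x i / s i else 0)
            = (if i = j then x j / s j else 0) := by
          intro i
          by_cases h : i = j
          · subst h; rw [if_pos ⟨rfl, hj⟩, if_pos rfl]
          · rw [if_neg (by tauto), if_neg h]
        rw [Finset.sum_congr rfl (fun i _ => e i), Finset.sum_ite_eq',
          if_pos (Finset.mem_range.mpr hj)]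
        rw [div_le_one (hspos j hj)]
        exact hdiag j hj
      · intro i hi
        dsimp only
        have e : ∀ j, (if i = j ∧ i < n + 1 then x i / s i else 0) * s j
            = (if j = i then x i / s i * s j else 0) := by
          intro j
          by_cases h : j = i
          · subst h; rw [if_pos ⟨rfl, hi⟩, if_pos rfl]
          · rw [if_neg (by tauto), if_neg h, zero_mul]
        rw [Finset.sum_congr rfl (fun j _ => e j), Finset.sum_ite_eq',
          if_pos (Finset.mem_range.mpr hi), div_mul_cancel₀]
        exact (hspos i hi).ne'
    · -- m < n : mix machines m and m+1 against job 0, recurse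
      have hmlt : m < n := lt_of_le_of_ne hmn hmcase
      have hsm1 : s (m+1) < x 0 := by
        have h := Nat.findGreatest_is_greatest (P := fun j => x 0 ≤ s j)
          (Nat.lt_succ_self m) (by omega)
        exact lt_of_not_ge h
      have hd : 0 < s m - s (m+1) := by linarith
      set lam := (x 0 - s (m+1)) / (s m - s (m+1)) with hlam_def
      have hlam0 : 0 < lam := div_pos (by linarith) hd
      have hlam1 : lam ≤ 1 := by
        rw [hlam_def, div_le_one hd]; linarith
      have id1 : lam * s m + (1 - lam) * s (m+1) = x 0 := by
        have h := div_mul_cancel₀ (x 0 - s (m+1)) (ne_of_gt hd)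
        rw [hlam_def]; nlinarith [h]
      set v := s m + s (m+1) - x 0 with hv_def
      have id2 : (1 - lam) * s m + lam * s (m+1) = v := by
        rw [hv_def]; linarith [id1]
      have hv_le : v ≤ s m := by rw [hv_def]; linarith
      have hv_ge : s (m+1) ≤ v := by rw [hv_def]; linarith
      set s' : ℕ → ℝ := fun j => if j < m then s j else if j = m then v else s (j+1)
        with hs'_def
      set x' : ℕ → ℝ := fun i => x (i+1) with hx'_def
      have hs'lt : ∀ j, j < m → s' j = s j := by
        intro j hj; simp only [hs'_def]; rw [if_pos hj]
      have hs'm : s' m = v := by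
        simp [hs'_def]
      have hs'gt : ∀ j, m < j → s' j = s (j+1) := by
        intro j hj; simp only [hs'_def]; rw [if_neg (by omega), if_neg (by omega)]
      have hx'e : ∀ i, x' i = x (i+1) := fun i => rfl
      -- hypotheses for IH
      have hs' : ∀ i j : ℕ, i ≤ j → j < n → s' j ≤ s' i := by
        intro i j hij hj
        rcases lt_trichotomy j m with hjm | rfl | hjm
        · rw [hs'lt j hjm, hs'lt i (by omega)]
          exact hs i j hij (by omega)
        · rcases eq_or_lt_of_le hij with rfl | him
          · exact le_refl _
          · rw [hs'lt i him, hs'm]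
            calc v ≤ s m := hv_le
            _ ≤ s i := hs i m (le_of_lt him) (by omega)
        · rw [hs'gt j hjm]
          rcases lt_trichotomy i m with him | rfl | him
          · rw [hs'lt i him]; exact hs i (j+1) (by omega) (by omega)
          · rw [hs'm]
            calc s (j+1) ≤ s (m+1) := hs (m+1) (j+1) (by omega) (by omega)
            _ ≤ v := hv_ge
          · rw [hs'gt i him]; exact hs (i+1) (j+1) (by omega) (by omega)
      have hs'pos : ∀ j < n, 0 < s' j := by
        intro j hj
        rcases lt_trichotomy j m with hjm | rfl | hjm
        · rw [hs'lt j hjm]; exact hspos j (by omega)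
        · rw [hs'm]; have := hspos (m+1) (by omega); linarith
        · rw [hs'gt j hjm]; exact hspos (j+1) (by omega)
      have hx' : ∀ i j : ℕ, i ≤ j → j < n → x' j ≤ x' i := by
        intro i j hij hj
        exact hx (i+1) (j+1) (by omega) (by omega)
      have hx'pos : ∀ i < n, 0 ≤ x' i := fun i hi => hxpos (i+1) (by omega)
      have key : ∀ ℓ, m ≤ ℓ → ∑ j ∈ range (ℓ+1), s' j = ∑ j ∈ range (ℓ+2), s j - x 0 := by
        intro ℓ hℓ
        induction ℓ, hℓ using Nat.le_induction with
        | base =>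
          rw [Finset.sum_range_succ]
          have e1 : ∑ j ∈ range m, s' j = ∑ j ∈ range m, s j :=
            Finset.sum_congr rfl (fun j hj => hs'lt j (Finset.mem_range.mp hj))
          rw [e1, hs'm, Finset.sum_range_succ s (m+1), Finset.sum_range_succ s m,
            hv_def]
          ring
        | succ ℓ hℓ ih =>
          rw [Finset.sum_range_succ, ih, hs'gt (ℓ+1) (by omega),
            Finset.sum_range_succ s (ℓ+2)]
          ring
      have hpre' : ∀ ℓ < n, ∑ i ∈ range (ℓ+1), x' i ≤ ∑ i ∈ range (ℓ+1), s' i := by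
        intro ℓ hℓ
        rcases lt_or_ge ℓ m with hcase | hcase
        · apply Finset.sum_le_sum
          intro i hi
          have hi' : i < m := by
            have := Finset.mem_range.mp hi; omega
          rw [hx'e, hs'lt i hi']
          calc x (i+1) ≤ x 0 := hx 0 (i+1) (Nat.zero_le _) (by omega)
          _ ≤ s m := hsm
          _ ≤ s i := hs i m (by omega) (by omega)
        · have lhs : ∑ i ∈ range (ℓ+1), x' i = ∑ i ∈ range (ℓ+2), x i - x 0 := by
            have e := Finset.sum_range_succ' x (ℓ+1)
            have e2 : ∑ i ∈ range (ℓ+1), x' i = ∑ i ∈ range (ℓ+1), x (i+1) :=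
              Finset.sum_congr rfl (fun i _ => hx'e i)
            rw [e2]; linarith [e]
          rw [lhs, key ℓ hcase]
          have := hpre (ℓ+1) (by omega)
          linarith
      obtain ⟨t', ht'0, ht'row, ht'col, ht'proc⟩ := IH s' x' hs' hs'pos hx' hx'pos hpre'
      -- sum splitting helpers
      have split1 : ∀ g : ℕ → ℝ, ∑ j ∈ range (n+1), g j
          = ∑ j ∈ range m, g j + g m + g (m+1) + ∑ j ∈ Ico (m+2) (n+1), g j := by
        intro g
        rw [Finset.range_eq_Ico,
          ← Finset.sum_Ico_consecutive g (Nat.zero_le m) (by omega : m ≤ n+1),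
          Finset.sum_eq_sum_Ico_succ_bot (by omega : m < n+1) g,
          Finset.sum_eq_sum_Ico_succ_bot (by omega : m+1 < n+1) g,
          ← Finset.range_eq_Ico]
        ring
      have split2 : ∀ g : ℕ → ℝ, ∑ j ∈ range n, g j
          = ∑ j ∈ range m, g j + g m + ∑ j ∈ Ico (m+1) n, g j := by
        intro g
        rw [Finset.range_eq_Ico,
          ← Finset.sum_Ico_consecutive g (Nat.zero_le m) (le_of_lt hmlt),
          Finset.sum_eq_sum_Ico_succ_bot hmlt g, ← Finset.range_eq_Ico]
        ring
      have shift : ∀ g : ℕ → ℝ, ∑ j ∈ Ico (m+2) (n+1), g (j-1) = ∑ j ∈ Ico (m+1) n, g j := by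
        intro g
        rw [Finset.sum_Ico_eq_sum_range, Finset.sum_Ico_eq_sum_range]
        have e : n + 1 - (m + 2) = n - (m+1) := by omega
        rw [e]
        apply Finset.sum_congr rfl
        intro i _
        congr 1
        omega
      -- the schedule
      set t : ℕ → ℕ → ℝ := fun i j =>
        if i = 0 then (if j = m then lam else if j = m + 1 then 1 - lam else 0)
        else if j < m then t' (i-1) j
        else if j = m then (1 - lam) * t' (i-1) m
        else if j = m + 1 then lam * t' (i-1) m
        else t' (i-1) (j-1) with ht_def
      have t0_eq : ∀ j, t 0 j = if j = m then lam else if j = m + 1 then 1 - lam else 0 := by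
        intro j; simp [ht_def]
      have ti_eq : ∀ i j, t (i+1) j = if j < m then t' i j else if j = m then (1 - lam) * t' i m
          else if j = m + 1 then lam * t' i m else t' i (j-1) := by
        intro i j; simp [ht_def]
      refine ⟨t, ?_, ?_, ?_, ?_⟩
      · -- nonneg
        intro i j
        rcases Nat.eq_zero_or_pos i with rfl | hipos
        · rw [t0_eq]
          split
          · linarith
          · split
            · linarith
            · exact le_refl 0
        · obtain ⟨i', rfl⟩ : ∃ i', i = i' + 1 := ⟨i - 1, by omega⟩
          rw [ti_eq]
          split
          · exact ht'0 i' j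
          · split
            · have := ht'0 i' m; nlinarith
            · split
              · have := ht'0 i' m; nlinarith
              · exact ht'0 i' (j-1)
      · -- rows
        intro i hi
        rcases Nat.eq_zero_or_pos i with rfl | hipos
        · rw [split1 (t 0)]
          have e1 : ∑ j ∈ range m, t 0 j = 0 := Finset.sum_eq_zero fun j hj => by
            have hjm : j < m := Finset.mem_range.mp hj
            rw [t0_eq, if_neg (by omega), if_neg (by omega)]
          have e2 : ∑ j ∈ Ico (m+2) (n+1), t 0 j = 0 := Finset.sum_eq_zero fun j hj => by
            have hj' := Finset.mem_Ico.mp hj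
            rw [t0_eq, if_neg (by omega), if_neg (by omega)]
          rw [e1, e2, t0_eq m, t0_eq (m+1), if_pos rfl, if_neg (by omega), if_pos rfl]
          linarith
        · obtain ⟨i', rfl⟩ : ∃ i', i = i' + 1 := ⟨i - 1, by omega⟩
          rw [split1 (t (i'+1))]
          have e1 : ∑ j ∈ range m, t (i'+1) j = ∑ j ∈ range m, t' i' j :=
            Finset.sum_congr rfl fun j hj => by
              rw [ti_eq, if_pos (Finset.mem_range.mp hj)]
          have e2 : ∑ j ∈ Ico (m+2) (n+1), t (i'+1) j = ∑ j ∈ Ico (m+1) n, t' i' j := by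
            rw [← shift (t' i')]
            apply Finset.sum_congr rfl
            intro j hj
            have hj' := Finset.mem_Ico.mp hj
            rw [ti_eq, if_neg (by omega), if_neg (by omega), if_neg (by omega)]
          have em : t (i'+1) m = (1 - lam) * t' i' m := by
            rw [ti_eq, if_neg (lt_irrefl m), if_pos rfl]
          have em1 : t (i'+1) (m+1) = lam * t' i' m := by
            rw [ti_eq, if_neg (by omega), if_neg (by omega), if_pos rfl]
          rw [e1, e2, em, em1]
          have hrow := ht'row i' (by omega)
          rw [split2 (t' i')] at hrow
          have hc : (1 - lam) * t' i' m + lam * t' i' m = t' i' m := by ring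
          linarith
      · -- columns
        intro j hj
        rw [Finset.sum_range_succ' (fun i => t i j) n]
        by_cases h1 : j < m
        · have e0 : t 0 j = 0 := by rw [t0_eq, if_neg (by omega), if_neg (by omega)]
          have e1 : ∑ i ∈ range n, t (i+1) j = ∑ i ∈ range n, t' i j :=
            Finset.sum_congr rfl fun i _ => by rw [ti_eq, if_pos h1]
          rw [e0, e1]
          have := ht'col j (by omega)
          linarith
        · by_cases h2 : j = m
          · subst h2
            have e0 : t 0 m = lam := by rw [t0_eq, if_pos rfl]
            have e1 : ∑ i ∈ range n, t (i+1) m = (1 - lam) * ∑ i ∈ range n, t' i m := by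
              rw [Finset.mul_sum]
              exact Finset.sum_congr rfl fun i _ => by
                rw [ti_eq, if_neg (lt_irrefl m), if_pos rfl]
            rw [e0, e1]
            have hcol := ht'col m hmlt
            have hnn : (0:ℝ) ≤ ∑ i ∈ range n, t' i m :=
              Finset.sum_nonneg fun i _ => ht'0 i m
            nlinarith
          · by_cases h3 : j = m + 1
            · subst h3
              have e0 : t 0 (m+1) = 1 - lam := by
                rw [t0_eq, if_neg (by omega), if_pos rfl]
              have e1 : ∑ i ∈ range n, t (i+1) (m+1) = lam * ∑ i ∈ range n, t' i m := by
                rw [Finset.mul_sum]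
                exact Finset.sum_congr rfl fun i _ => by
                  rw [ti_eq, if_neg (by omega), if_neg (by omega), if_pos rfl]
              rw [e0, e1]
              have hcol := ht'col m hmlt
              have hnn : (0:ℝ) ≤ ∑ i ∈ range n, t' i m :=
                Finset.sum_nonneg fun i _ => ht'0 i m
              nlinarith
            · have h4 : m + 2 ≤ j := by omega
              have e0 : t 0 j = 0 := by rw [t0_eq, if_neg (by omega), if_neg (by omega)]
              have e1 : ∑ i ∈ range n, t (i+1) j = ∑ i ∈ range n, t' i (j-1) :=
                Finset.sum_congr rfl fun i _ => by
                  rw [ti_eq, if_neg (by omega), if_neg (by omega), if_neg (by omega)]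
              rw [e0, e1]
              have := ht'col (j-1) (by omega)
              linarith
      · -- processing
        intro i hi
        rcases Nat.eq_zero_or_pos i with rfl | hipos
        · rw [split1 (fun j => t 0 j * s j)]
          have e1 : ∑ j ∈ range m, t 0 j * s j = 0 := Finset.sum_eq_zero fun j hj => by
            have hjm : j < m := Finset.mem_range.mp hj
            rw [t0_eq, if_neg (by omega), if_neg (by omega), zero_mul]
          have e2 : ∑ j ∈ Ico (m+2) (n+1), t 0 j * s j = 0 := Finset.sum_eq_zero fun j hj => by
            have hj' := Finset.mem_Ico.mp hj
            rw [t0_eq, if_neg (by omega), if_neg (by omega), zero_mul]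
          rw [e1, e2, t0_eq m, t0_eq (m+1), if_pos rfl, if_neg (by omega), if_pos rfl]
          linarith [id1]
        · obtain ⟨i', rfl⟩ : ∃ i', i = i' + 1 := ⟨i - 1, by omega⟩
          have hproc := ht'proc i' (by omega)
          rw [split2 (fun j => t' i' j * s' j)] at hproc
          rw [split1 (fun j => t (i'+1) j * s j)]
          have eA : ∑ j ∈ range m, t (i'+1) j * s j = ∑ j ∈ range m, t' i' j * s' j :=
            Finset.sum_congr rfl fun j hj => by
              have hjm := Finset.mem_range.mp hj
              rw [ti_eq, if_pos hjm, hs'lt j hjm]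
          have eC : ∑ j ∈ Ico (m+2) (n+1), t (i'+1) j * s j
              = ∑ j ∈ Ico (m+1) n, t' i' j * s' j := by
            rw [← shift (fun j => t' i' j * s' j)]
            apply Finset.sum_congr rfl
            intro j hj
            have hj' := Finset.mem_Ico.mp hj
            rw [ti_eq, if_neg (by omega), if_neg (by omega), if_neg (by omega)]
            rw [hs'gt (j-1) (by omega)]
            congr 2
            omega
          have em : t (i'+1) m = (1 - lam) * t' i' m := by
            rw [ti_eq, if_neg (lt_irrefl m), if_pos rfl]
          have em1 : t (i'+1) (m+1) = lam * t' i' m := by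
            rw [ti_eq, if_neg (by omega), if_neg (by omega), if_pos rfl]
          rw [eA, eC, em, em1, hs'm] at *
          have hmix : (1 - lam) * t' i' m * s m + lam * t' i' m * s (m+1) = t' i' m * v := by
            rw [← id2]; ring
          have := hx'e i'
          linarith [hproc, hmix]



open Finset

/-- Existence of a preemptive schedule completing all jobs within one unit of time:
`t i j` is the amount of time job `i` runs on machine `j`; each job is on at most
one machine at a time and each machine processes at most one job at a time
(so each job's total time and each machine's total busy time is at most `1`),
and job `i` is completed, i.e. receives `∑ j, t i j * s j = x i` units of processing. -/
def PreemptiveScheduleInUnitTime {k : ℕ} (s x : Fin k → ℝ) : Prop :=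
  ∃ t : Fin k → Fin k → ℝ,
    (∀ i j, 0 ≤ t i j) ∧
    (∀ i, ∑ j, t i j ≤ 1) ∧
    (∀ j, ∑ i, t i j ≤ 1) ∧
    (∀ i, x i = ∑ j, t i j * s j)

/-- Given jobs with service requirements `x₁ ≥ ... ≥ x_k ≥ 0` and machines with
speeds `s₁ > ... > s_k > 0`, a preemptive schedule completing all jobs within one
unit of time exists iff `∑_{i≤ℓ} x i ≤ ∑_{i≤ℓ} s i` for all `ℓ`. -/
theorem stmt1 {k : ℕ} (s x : Fin k → ℝ)
    (hs : StrictAnti s) (hspos : ∀ j, 0 < s j)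
    (hx : Antitone x) (hxnonneg : ∀ i, 0 ≤ x i) :
    PreemptiveScheduleInUnitTime s x ↔
      ∀ ℓ : Fin k, ∑ i ∈ Finset.Iic ℓ, x i ≤ ∑ i ∈ Finset.Iic ℓ, s i := by
  constructor
  · rintro ⟨t, ht0, htrow, htcol, htproc⟩ ℓ
    have hxs : ∑ i ∈ Iic ℓ, x i = ∑ j : Fin k, (∑ i ∈ Iic ℓ, t i j) * s j := by
      rw [Finset.sum_congr rfl (fun i _ => htproc i), Finset.sum_comm]
      exact Finset.sum_congr rfl fun j _ => (Finset.sum_mul _ _ _).symm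
    set T : Fin k → ℝ := fun j => ∑ i ∈ Iic ℓ, t i j with hT
    have hT0 : ∀ j, 0 ≤ T j := fun j => Finset.sum_nonneg fun i _ => ht0 i j
    have hT1 : ∀ j, T j ≤ 1 := fun j =>
      le_trans (Finset.sum_le_sum_of_subset_of_nonneg (Finset.subset_univ _)
        (fun i _ _ => ht0 i j)) (htcol j)
    have hTsum : ∑ j, T j ≤ ((ℓ : ℕ) + 1 : ℝ) := by
      calc ∑ j, T j = ∑ i ∈ Iic ℓ, ∑ j, t i j := Finset.sum_comm
      _ ≤ ∑ _i ∈ Iic ℓ, (1:ℝ) := Finset.sum_le_sum fun i _ => htrow i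
      _ = ((ℓ : ℕ) + 1 : ℝ) := by
          rw [Finset.sum_const, Fin.card_Iic, nsmul_eq_mul, mul_one]
          push_cast; ring
    rw [hxs]
    have hsplit : ∑ j : Fin k, T j * s j
        = ∑ j ∈ univ \ Iic ℓ, T j * s j + ∑ j ∈ Iic ℓ, T j * s j :=
      (Finset.sum_sdiff (Finset.subset_univ _)).symm
    have hsl : (0:ℝ) ≤ s ℓ := (hspos ℓ).le
    have h1 : ∑ j ∈ univ \ Iic ℓ, T j * s j ≤ (∑ j ∈ univ \ Iic ℓ, T j) * s ℓ := by
      rw [Finset.sum_mul]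
      apply Finset.sum_le_sum
      intro j hj
      have hjl : ℓ ≤ j := by
        have := (Finset.mem_sdiff.mp hj).2
        rw [Finset.mem_Iic] at this
        exact le_of_lt (lt_of_not_ge this)
      exact mul_le_mul_of_nonneg_left (hs.antitone hjl) (hT0 j)
    have h2 : ∑ j ∈ univ \ Iic ℓ, T j = ∑ j, T j - ∑ j ∈ Iic ℓ, T j := by
      have := Finset.sum_sdiff (f := T) (Finset.subset_univ (Iic ℓ))
      linarith
    have h3 : (∑ j ∈ univ \ Iic ℓ, T j) * s ℓ
        ≤ (((ℓ : ℕ) + 1 : ℝ) - ∑ j ∈ Iic ℓ, T j) * s ℓ := by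
      apply mul_le_mul_of_nonneg_right _ hsl
      rw [h2]; linarith
    have expand : ∑ j ∈ Iic ℓ, (T j * s j + (1 - T j) * s ℓ)
        = ∑ j ∈ Iic ℓ, T j * s j + (((ℓ : ℕ) + 1 : ℝ) - ∑ j ∈ Iic ℓ, T j) * s ℓ := by
      rw [Finset.sum_add_distrib]
      congr 1
      rw [← Finset.sum_mul]
      congr 1
      rw [Finset.sum_sub_distrib, Finset.sum_const, Fin.card_Iic, nsmul_eq_mul, mul_one]
      push_cast; ring
    have h4 : ∑ j ∈ Iic ℓ, (T j * s j + (1 - T j) * s ℓ) ≤ ∑ j ∈ Iic ℓ, s j := by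
      apply Finset.sum_le_sum
      intro j hj
      have hjs : s ℓ ≤ s j := hs.antitone (Finset.mem_Iic.mp hj)
      nlinarith [hT1 j, hT0 j]
    linarith [hsplit, h1, h3, h4, expand]
  · intro hcond
    classical
    set S : ℕ → ℝ := fun j => if h : j < k then s ⟨j, h⟩ else 1 with hS
    set X : ℕ → ℝ := fun i => if h : i < k then x ⟨i, h⟩ else 0 with hX
    have hS_eval : ∀ (j : ℕ) (h : j < k), S j = s ⟨j, h⟩ := by
      intro j h; simp [hS, h]
    have hX_eval : ∀ (i : ℕ) (h : i < k), X i = x ⟨i, h⟩ := by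
      intro i h; simp [hX, h]
    obtain ⟨T, hT0, hTrow, hTcol, hTproc⟩ := lemA' k S X
      (fun i j hij hj => by
        rw [hS_eval j hj, hS_eval i (lt_of_le_of_lt hij hj)]
        exact hs.antitone (by simpa [Fin.mk_le_mk] using hij))
      (fun j hj => by rw [hS_eval j hj]; exact hspos _)
      (fun i j hij hj => by
        rw [hX_eval j hj, hX_eval i (lt_of_le_of_lt hij hj)]
        exact hx (by simpa [Fin.mk_le_mk] using hij))
      (fun i hi => by rw [hX_eval i hi]; exact hxnonneg _)
      (fun ℓn hℓ => by
        have := hcond ⟨ℓn, hℓ⟩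
        rw [sum_Iic_eq_range x X (fun j h => hX_eval j h),
            sum_Iic_eq_range s S (fun j h => hS_eval j h)] at this
        exact this)
    refine ⟨fun i j => T i j, fun i j => hT0 i j, ?_, ?_, ?_⟩
    · intro i
      calc ∑ j : Fin k, T i j = ∑ j ∈ range k, T i j :=
            Fin.sum_univ_eq_sum_range (fun j => T i j) k
      _ ≤ 1 := hTrow i i.2
    · intro j
      calc ∑ i : Fin k, T i j = ∑ i ∈ range k, T i j :=
            Fin.sum_univ_eq_sum_range (fun i => T i j) k
      _ ≤ 1 := hTcol j j.2
    · intro i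
      have hp := hTproc i i.2
      rw [hX_eval i i.2] at hp
      calc x i = x ⟨(i : ℕ), i.2⟩ := by congr 1
      _ = ∑ j ∈ range k, T i j * S j := hp
      _ = ∑ j : Fin k, T i j * S j := (Fin.sum_univ_eq_sum_range (fun j => T i j * S j) k).symm
      _ = ∑ j : Fin k, T i j * s j := Finset.sum_congr rfl fun j _ => by
            rw [hS_eval j j.2]
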